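/- For k = 1/√2, the quantities a = K(1/√2) and b = 2E(1/√2) − K(1/√2) satisfy a·b = π/2. -/

import Mathlib

open Real

noncomputable def ellK (k : ℝ) : ℝ :=
  ∫ θ in (0 : ℝ)..(π / 2), 1 / Real.sqrt (1 - k ^ 2 * Real.sin θ ^ 2)

noncomputable def ellE (k : ℝ) : ℝ :=
  ∫ θ in (0 : ℝ)..(π / 2), Real.sqrt (1 - k ^ 2 * Real.sin θ ^ 2)

open MeasureTheory Set

namespace LegendreAux

lemma ksq : ((1 : ℝ) / Real.sqrt 2) ^ 2 = 1 / 2 := by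
  rw [div_pow, one_pow, Real.sq_sqrt (by norm_num : (0:ℝ) ≤ 2)]

/-- change of variables v = cos θ -/
lemma cos_change (g : ℝ → ℝ) :
    ∫ v in Ioo (0:ℝ) 1, g v = ∫ θ in Ioo (0:ℝ) (π/2), Real.sin θ * g (Real.cos θ) := by
  have hsub : Ioo (0:ℝ) (π/2) ⊆ Icc 0 π := fun x hx =>
    ⟨hx.1.le, by nlinarith [hx.2, Real.pi_pos]⟩
  have himg : Real.cos '' Ioo 0 (π/2) = Ioo (0:ℝ) 1 := by
    ext v
    constructor
    · rintro ⟨θ, hθ, rfl⟩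
      refine ⟨Real.cos_pos_of_mem_Ioo ⟨by linarith [hθ.1, Real.pi_div_two_pos], hθ.2⟩, ?_⟩
      have := Real.strictAntiOn_cos (left_mem_Icc.2 Real.pi_pos.le) (hsub hθ) hθ.1
      simpa using this
    · intro hv
      refine ⟨Real.arccos v, ⟨Real.arccos_pos.2 hv.2, Real.arccos_lt_pi_div_two.2 hv.1⟩,
        Real.cos_arccos (by linarith [hv.1]) hv.2.le⟩
  rw [← himg, integral_image_eq_integral_abs_deriv_smul measurableSet_Ioo
    (fun θ _ => (Real.hasDerivAt_cos θ).hasDerivWithinAt)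
    (Real.injOn_cos.mono hsub) g]
  refine setIntegral_congr_fun measurableSet_Ioo fun θ hθ => ?_
  have hs : 0 ≤ Real.sin θ := Real.sin_nonneg_of_nonneg_of_le_pi hθ.1.le (hsub hθ).2
  simp [abs_of_nonneg hs, smul_eq_mul]

/-- change of variables x = v ^ 4 -/
lemma pow4_change (g : ℝ → ℝ) :
    ∫ x in Ioo (0:ℝ) 1, g x = ∫ v in Ioo (0:ℝ) 1, (4 * v ^ 3) * g (v ^ 4) := by
  have hinj : InjOn (fun v : ℝ => v ^ 4) (Ioo 0 1) :=
    (pow_left_strictMonoOn₀ (by norm_num : (4:ℕ) ≠ 0)).injOn.mono fun x hx => hx.1.le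
  have himg : (fun v : ℝ => v ^ 4) '' Ioo 0 1 = Ioo (0:ℝ) 1 := by
    ext x
    constructor
    · rintro ⟨v, hv, rfl⟩
      exact ⟨pow_pos hv.1 4, pow_lt_one₀ hv.1.le hv.2 (by norm_num)⟩
    · intro hx
      refine ⟨x ^ ((4:ℝ)⁻¹), ⟨Real.rpow_pos_of_pos hx.1 _,
        Real.rpow_lt_one hx.1.le hx.2 (by norm_num)⟩, ?_⟩
      show (x ^ ((4:ℝ)⁻¹)) ^ (4:ℕ) = x
      rw [← Real.rpow_natCast (x ^ ((4:ℝ)⁻¹)) 4, ← Real.rpow_mul hx.1.le]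
      norm_num
  conv_lhs => rw [← himg]
  rw [integral_image_eq_integral_abs_deriv_smul measurableSet_Ioo
    (fun v _ => by simpa using (hasDerivAt_pow 4 v).hasDerivWithinAt) hinj g]
  refine setIntegral_congr_fun measurableSet_Ioo fun v hv => ?_
  rw [smul_eq_mul, abs_of_nonneg (mul_nonneg (by norm_num) (pow_nonneg hv.1.le 3))]

lemma betaR (a b : ℝ) (ha : 0 < a) (hb : 0 < b) :
    ∫ x in Ioo (0:ℝ) 1, x ^ (a - 1) * (1 - x) ^ (b - 1)
      = Real.Gamma a * Real.Gamma b / Real.Gamma (a + b) := by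
  have h1 : Complex.betaIntegral a b
      = ((∫ x in (0:ℝ)..1, x ^ (a - 1) * (1 - x) ^ (b - 1) : ℝ) : ℂ) := by
    rw [Complex.betaIntegral, ← intervalIntegral.integral_ofReal]
    refine intervalIntegral.integral_congr fun x hx => ?_
    rw [uIcc_of_le (by norm_num : (0:ℝ) ≤ 1)] at hx
    rw [Complex.ofReal_mul, Complex.ofReal_cpow hx.1, Complex.ofReal_cpow (by linarith [hx.2])]
    push_cast
    ring
  have h2 := Complex.Gamma_mul_Gamma_eq_betaIntegral (s := (a:ℂ)) (t := (b:ℂ))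
    (by rwa [Complex.ofReal_re]) (by rwa [Complex.ofReal_re])
  rw [h1, ← Complex.ofReal_add, Complex.Gamma_ofReal, Complex.Gamma_ofReal,
    Complex.Gamma_ofReal, ← Complex.ofReal_mul, ← Complex.ofReal_mul] at h2
  have h3 : Real.Gamma a * Real.Gamma b
      = Real.Gamma (a + b) * ∫ x in (0:ℝ)..1, x ^ (a - 1) * (1 - x) ^ (b - 1) :=
    Complex.ofReal_inj.1 h2
  have h4 : Real.Gamma (a + b) ≠ 0 := (Real.Gamma_pos_of_pos (by linarith)).ne'
  rw [← MeasureTheory.integral_Ioc_eq_integral_Ioo,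
    ← intervalIntegral.integral_of_le (by norm_num : (0:ℝ) ≤ 1)]
  field_simp
  linarith [h3]

lemma ellK_eq : ellK (1 / Real.sqrt 2)
    = ∫ v in Ioo (0:ℝ) 1, Real.sqrt 2 / Real.sqrt (1 - v ^ 4) := by
  rw [ellK, intervalIntegral.integral_of_le (by positivity),
    MeasureTheory.integral_Ioc_eq_integral_Ioo,
    cos_change (fun v => Real.sqrt 2 / Real.sqrt (1 - v ^ 4))]
  refine setIntegral_congr_fun measurableSet_Ioo fun θ hθ => ?_
  have hs : 0 < Real.sin θ :=
    Real.sin_pos_of_pos_of_lt_pi hθ.1 (by nlinarith [hθ.2, Real.pi_pos])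
  have hc : 0 < Real.cos θ :=
    Real.cos_pos_of_mem_Ioo ⟨by linarith [hθ.1, Real.pi_div_two_pos], hθ.2⟩
  have hpyth := Real.sin_sq_add_cos_sq θ
  have h1 : 1 - Real.cos θ ^ 4 = Real.sin θ ^ 2 * (1 + Real.cos θ ^ 2) := by nlinarith
  have h2 : 1 - (1 / Real.sqrt 2) ^ 2 * Real.sin θ ^ 2 = (1 + Real.cos θ ^ 2) / 2 := by
    rw [ksq]; nlinarith
  have hx : (0:ℝ) < 1 + Real.cos θ ^ 2 := by positivity
  have hxs : 0 < Real.sqrt (1 + Real.cos θ ^ 2) := Real.sqrt_pos.2 hx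
  have h2s : 0 < Real.sqrt 2 := Real.sqrt_pos.2 (by norm_num)
  rw [h1, h2, Real.sqrt_mul (sq_nonneg _), Real.sqrt_sq hs.le,
    Real.sqrt_div hx.le 2]
  field_simp

lemma ellE_eq : 2 * ellE (1 / Real.sqrt 2) - ellK (1 / Real.sqrt 2)
    = ∫ v in Ioo (0:ℝ) 1, Real.sqrt 2 * v ^ 2 / Real.sqrt (1 - v ^ 4) := by
  have hcont : Continuous fun θ : ℝ => 1 - (1 / Real.sqrt 2) ^ 2 * Real.sin θ ^ 2 := by
    continuity
  have hpos : ∀ θ : ℝ, 0 < 1 - (1 / Real.sqrt 2) ^ 2 * Real.sin θ ^ 2 := fun θ => by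
    rw [ksq]; nlinarith [Real.sin_sq_le_one θ]
  have h1 : IntervalIntegrable
      (fun θ => 2 * Real.sqrt (1 - (1 / Real.sqrt 2) ^ 2 * Real.sin θ ^ 2)) volume 0 (π/2) :=
    (continuous_const.mul hcont.sqrt).intervalIntegrable _ _
  have h2 : IntervalIntegrable
      (fun θ => 1 / Real.sqrt (1 - (1 / Real.sqrt 2) ^ 2 * Real.sin θ ^ 2)) volume 0 (π/2) :=
    (continuous_const.div hcont.sqrt fun θ =>
      (Real.sqrt_pos.2 (hpos θ)).ne').intervalIntegrable _ _
  rw [ellE, ellK, ← intervalIntegral.integral_const_mul, ← intervalIntegral.integral_sub h1 h2,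
    intervalIntegral.integral_of_le (by positivity),
    MeasureTheory.integral_Ioc_eq_integral_Ioo,
    cos_change (fun v => Real.sqrt 2 * v ^ 2 / Real.sqrt (1 - v ^ 4))]
  refine setIntegral_congr_fun measurableSet_Ioo fun θ hθ => ?_
  have hs : 0 < Real.sin θ :=
    Real.sin_pos_of_pos_of_lt_pi hθ.1 (by nlinarith [hθ.2, Real.pi_pos])
  have hc : 0 < Real.cos θ :=
    Real.cos_pos_of_mem_Ioo ⟨by linarith [hθ.1, Real.pi_div_two_pos], hθ.2⟩
  have hpyth := Real.sin_sq_add_cos_sq θ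
  have e1 : 1 - Real.cos θ ^ 4 = Real.sin θ ^ 2 * (1 + Real.cos θ ^ 2) := by nlinarith
  have e2 : 1 - (1 / Real.sqrt 2) ^ 2 * Real.sin θ ^ 2 = (1 + Real.cos θ ^ 2) / 2 := by
    rw [ksq]; nlinarith
  have hx : (0:ℝ) < 1 + Real.cos θ ^ 2 := by positivity
  have hxs : 0 < Real.sqrt (1 + Real.cos θ ^ 2) := Real.sqrt_pos.2 hx
  have h2s : 0 < Real.sqrt 2 := Real.sqrt_pos.2 (by norm_num)
  have hh : Real.sqrt (1 + Real.cos θ ^ 2) * Real.sqrt (1 + Real.cos θ ^ 2)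
      = 1 + Real.cos θ ^ 2 := Real.mul_self_sqrt hx.le
  have h22 : Real.sqrt 2 * Real.sqrt 2 = 2 := Real.mul_self_sqrt (by norm_num)
  rw [e1, e2, Real.sqrt_mul (sq_nonneg _), Real.sqrt_sq hs.le, Real.sqrt_div hx.le 2]
  field_simp
  linear_combination 2 * hh - (1 + Real.cos θ ^ 2) * h22

lemma lemn (a : ℝ) (ha : 0 < a) (n : ℕ) (hn : (4:ℝ) * (a - 1) = (n:ℝ) - 3) :
    ∫ v in Ioo (0:ℝ) 1, Real.sqrt 2 * v ^ n / Real.sqrt (1 - v ^ 4)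
      = Real.sqrt 2 / 4 * (Real.Gamma a * Real.Gamma (1/2) / Real.Gamma (a + 1/2)) := by
  rw [← betaR a (1/2) ha (by norm_num),
    pow4_change (fun x => x ^ (a - 1) * (1 - x) ^ ((1:ℝ)/2 - 1)), ← integral_const_mul]
  refine setIntegral_congr_fun measurableSet_Ioo fun v hv => ?_
  have hv4 : v ^ 4 < 1 := pow_lt_one₀ hv.1.le hv.2 (by norm_num)
  have hv1 : 0 < 1 - v ^ 4 := by linarith
  have e1 : (v ^ 4 : ℝ) ^ (a - 1) = v ^ n * (v ^ 3)⁻¹ := by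
    rw [← Real.rpow_natCast v 4, ← Real.rpow_mul hv.1.le,
      show ((4:ℕ):ℝ) * (a - 1) = (n:ℝ) + (-(3:ℝ)) by push_cast; linarith [hn],
      Real.rpow_add hv.1, Real.rpow_neg hv.1.le, Real.rpow_natCast,
      show (3:ℝ) = ((3:ℕ):ℝ) by norm_num, Real.rpow_natCast]
  have e2 : (1 - v ^ 4 : ℝ) ^ ((1:ℝ)/2 - 1) = (Real.sqrt (1 - v ^ 4))⁻¹ := by
    rw [show (1:ℝ)/2 - 1 = -(1/2) by norm_num, Real.rpow_neg hv1.le, Real.sqrt_eq_rpow]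
  have hvs : 0 < Real.sqrt (1 - v ^ 4) := Real.sqrt_pos.2 hv1
  have hv0 : v ≠ 0 := hv.1.ne'
  have hS : Real.sqrt (1 - v ^ 4) ≠ 0 := hvs.ne'
  have e3 : 4 * v ^ 3 * (v ^ n * (v ^ 3)⁻¹ * (Real.sqrt (1 - v ^ 4))⁻¹)
      = 4 * (v ^ n / Real.sqrt (1 - v ^ 4)) := by
    field_simp
  rw [e1, e2, e3]
  ring

end LegendreAux

theorem legendre_special_case :
    ellK (1 / Real.sqrt 2) * (2 * ellE (1 / Real.sqrt 2) - ellK (1 / Real.sqrt 2)) = π / 2 := by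
  have hK : ellK (1 / Real.sqrt 2)
      = Real.sqrt 2 / 4 * (Real.Gamma (1/4) * Real.Gamma (1/2) / Real.Gamma (1/4 + 1/2)) := by
    rw [LegendreAux.ellK_eq, ← LegendreAux.lemn (1/4) (by norm_num) 0 (by norm_num)]
    simp
  have hE : 2 * ellE (1 / Real.sqrt 2) - ellK (1 / Real.sqrt 2)
      = Real.sqrt 2 / 4 * (Real.Gamma (3/4) * Real.Gamma (1/2) / Real.Gamma (3/4 + 1/2)) := by
    rw [LegendreAux.ellE_eq, ← LegendreAux.lemn (3/4) (by norm_num) 2 (by norm_num)]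
  rw [hE, hK]
  have hA := Real.Gamma_pos_of_pos (by norm_num : (0:ℝ) < 1/4)
  have hB := Real.Gamma_pos_of_pos (by norm_num : (0:ℝ) < 3/4)
  have h12 : Real.Gamma (1/2 : ℝ) = Real.sqrt π := Real.Gamma_one_half_eq
  have h34 : Real.Gamma ((1:ℝ)/4 + 1/2) = Real.Gamma (3/4) := by norm_num
  have h54 : Real.Gamma ((3:ℝ)/4 + 1/2) = (1/4) * Real.Gamma (1/4) := by
    rw [show (3:ℝ)/4 + 1/2 = 1/4 + 1 by norm_num, Real.Gamma_add_one (by norm_num)]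
  have hpi : Real.sqrt π * Real.sqrt π = π := Real.mul_self_sqrt Real.pi_pos.le
  have h22 : Real.sqrt 2 * Real.sqrt 2 = 2 := Real.mul_self_sqrt (by norm_num)
  rw [h12, h34, h54]
  field_simp
  linear_combination (2 * (Real.sqrt π * Real.sqrt π)) * h22 + 4 * hpi
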